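/- arXiv:1503.09021 — 2 statements merged into one kernel-verified Lean document; each statement's English description precedes it below -/
import Mathlib

section
/- Let n ≥ 3, let p : Fin n → ℝ² be a strictly convex polygon, and let d ∈ ℝ² be a nonzero vector such that ⟨d, p(i+1) − p(i)⟩ ≠ 0 for every index i (indices mod n), i.e., no edge of p is orthogonal to d. Then p is d-monotone. -/
noncomputable section

/-- Cross product of two planar vectors: cross((a,b),(c,d)) = a·d − b·c. -/
def cross (a b : ℝ × ℝ) : ℝ := a.1 * b.2 - a.2 * b.1

/-- Standard inner product on ℝ². -/
def inner2 (a b : ℝ × ℝ) : ℝ := a.1 * b.1 + a.2 * b.2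

/-- `p` is a counterclockwise convex polygon: pairwise distinct vertices and
`cross (p(i+1) − p(i)) (p(j) − p(i)) ≥ 0` for all `i` and all `j ∉ {i, i+1}`. -/
def IsCCWConvex {n : ℕ} [NeZero n] (p : Fin n → ℝ × ℝ) : Prop :=
  Function.Injective p ∧
    ∀ i j : Fin n, j ≠ i → j ≠ i + 1 → 0 ≤ cross (p (i + 1) - p i) (p j - p i)

/-- `p` is a counterclockwise strictly convex polygon. -/
def IsCCWStrictConvex {n : ℕ} [NeZero n] (p : Fin n → ℝ × ℝ) : Prop :=
  Function.Injective p ∧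
    ∀ i j : Fin n, j ≠ i → j ≠ i + 1 → 0 < cross (p (i + 1) - p i) (p j - p i)

/-- `p` is a convex polygon: it or its index-reversal is counterclockwise convex. -/
def IsConvexPolygon {n : ℕ} [NeZero n] (p : Fin n → ℝ × ℝ) : Prop :=
  IsCCWConvex p ∨ IsCCWConvex (p ∘ Fin.rev)

/-- `p` is a strictly convex polygon: it or its index-reversal is
counterclockwise strictly convex. -/
def IsStrictConvexPolygon {n : ℕ} [NeZero n] (p : Fin n → ℝ × ℝ) : Prop :=
  IsCCWStrictConvex p ∨ IsCCWStrictConvex (p ∘ Fin.rev)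

open Fin.NatCast in
/-- The polygon `p` is `d`-monotone: there are indices `s ≠ t` such that both of
the two paths from `s` to `t` around the cyclic sequence (one in each cyclic
direction) have strictly increasing inner product with `d` along the traversal. -/
def PolyMonotoneIn {n : ℕ} [NeZero n] (d : ℝ × ℝ) (p : Fin n → ℝ × ℝ) : Prop :=
  ∃ s t : Fin n, s ≠ t ∧
    (∀ k : ℕ, k < ((t - s : Fin n) : ℕ) →
      inner2 d (p (s + (k : Fin n))) < inner2 d (p (s + (k : Fin n) + 1))) ∧
    (∀ k : ℕ, k < ((s - t : Fin n) : ℕ) →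
      inner2 d (p (s - (k : Fin n))) < inner2 d (p (s - (k : Fin n) - 1)))

open Fin.NatCast Fin.CommRing

lemma inner2_sub (d x y : ℝ × ℝ) : inner2 d (x - y) = inner2 d x - inner2 d y := by
  simp [inner2]; ring

lemma cross_shift (a b c : ℝ × ℝ) : cross (b - a) (c - a) = cross (b - a) (c - b) := by
  simp [cross]; ring

lemma cross_decomp (d u v : ℝ × ℝ) :
    inner2 d u * cross d v - cross d u * inner2 d v = (d.1 ^ 2 + d.2 ^ 2) * cross u v := by
  simp [cross, inner2]; ring

lemma dsq_pos {d : ℝ × ℝ} (hd : d ≠ 0) : 0 < d.1 ^ 2 + d.2 ^ 2 := by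
  rcases eq_or_ne d.1 0 with h1 | h1
  · rcases eq_or_ne d.2 0 with h2 | h2
    · exact absurd (Prod.ext h1 h2) hd
    · positivity
  · positivity

lemma key_max {Aα Aβ Aw Cα Cβ Cw : ℝ} (h1 : 0 < Aα * Cw - Cα * Aw)
    (h2 : 0 < Aβ * Cw - Cβ * Aw) (h3 : 0 < Aα * Cβ - Cα * Aβ)
    (ha : 0 < Aα) (hb : Aβ < 0) : Aw < 0 := by
  by_contra h
  push_neg at h
  nlinarith [mul_nonneg h h3.le, mul_pos ha h2, mul_pos (neg_pos.mpr hb) h1]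

lemma fin_one_ne_zero {n : ℕ} [NeZero n] (hn : 3 ≤ n) : (1 : Fin n) ≠ 0 := by
  intro h
  have := congrArg Fin.val h
  rw [Fin.val_one', Fin.val_zero, Nat.mod_eq_of_lt (by omega)] at this
  omega

lemma fin_two_ne_zero {n : ℕ} [NeZero n] (hn : 3 ≤ n) : (2 : Fin n) ≠ 0 := by
  intro h
  have := congrArg Fin.val h
  rw [show (2:Fin n) = ((2:ℕ):Fin n) by norm_num, Fin.val_natCast, Fin.val_zero,
    Nat.mod_eq_of_lt (by omega)] at this
  omega

lemma fin_rev_eq {n : ℕ} [NeZero n] (j : Fin n) : Fin.rev j = -j - 1 := by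
  have h : Fin.rev j + (j + 1) = 0 := by
    rw [Fin.ext_iff]
    simp only [Fin.add_def, Fin.rev, Fin.val_one', Fin.val_zero]
    have ha := j.isLt
    rcases eq_or_lt_of_le (Nat.one_le_iff_ne_zero.mpr (NeZero.ne n)) with h | h
    · have hn1 : n = 1 := h.symm
      subst hn1; omega
    · have h1 : 1 % n = 1 := Nat.mod_eq_of_lt h
      rw [h1]
      rcases eq_or_lt_of_le (Nat.succ_le_of_lt ha) with h2 | h2
      · have h3 : ↑j + 1 = n := h2
        rw [h3, Nat.mod_self, Nat.sub_self]
        simp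
      · rw [Nat.mod_eq_of_lt h2, Nat.sub_add_cancel (le_of_lt h2), Nat.mod_self]
  have := eq_neg_of_add_eq_zero_left h
  rw [this]; ring

lemma localmax {n : ℕ} [NeZero n] (hn : 3 ≤ n) (p : Fin n → ℝ × ℝ)
    (hc : ∀ i j : Fin n, j ≠ i → j ≠ i + 1 → 0 < cross (p (i + 1) - p i) (p j - p i))
    (d : ℝ × ℝ) (hd : d ≠ 0) (u : Fin n)
    (h1 : 0 < inner2 d (p u - p (u - 1)))
    (h2 : inner2 d (p (u + 1) - p u) < 0) :
    ∀ q : Fin n, q ≠ u → inner2 d (p q) < inner2 d (p u) := by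
  intro q hq
  have hu1 : (u - 1) + 1 = u := sub_add_cancel u 1
  have hne1 : u + 1 ≠ u - 1 := by
    intro h
    apply fin_two_ne_zero hn
    calc (2 : Fin n) = (u + 1) - (u - 1) := by ring
    _ = 0 := by rw [h]; ring
  have hne2 : u + 1 ≠ u := by
    intro h
    apply fin_one_ne_zero hn
    calc (1 : Fin n) = (u + 1) - u := by ring
    _ = 0 := by rw [h]; ring
  have hαβ : 0 < cross (p u - p (u - 1)) (p (u + 1) - p u) := by
    have h := hc (u - 1) (u + 1) hne1 (by rw [hu1]; exact hne2)
    rw [hu1, cross_shift (p (u-1)) (p u) (p (u+1))] at h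
    exact h
  by_cases hq1 : q = u - 1
  · subst hq1
    rw [inner2_sub] at h1; linarith
  by_cases hq2 : q = u + 1
  · subst hq2
    rw [inner2_sub] at h2; linarith
  have hcwβ : 0 < cross (p (u + 1) - p u) (p q - p u) := hc u q hq hq2
  have hcwα : 0 < cross (p u - p (u - 1)) (p q - p u) := by
    have h := hc (u - 1) q hq1 (by rw [hu1]; exact hq)
    rw [hu1, cross_shift (p (u-1)) (p u) (p q)] at h
    exact h
  have hD := dsq_pos hd
  have h1' := mul_pos hD hcwα
  have h2' := mul_pos hD hcwβ
  have h3' := mul_pos hD hαβ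
  rw [← cross_decomp] at h1' h2' h3'
  have hw : inner2 d (p q - p u) < 0 := key_max h1' h2' h3' h1 h2
  rw [inner2_sub] at hw; linarith

lemma ccw_mono {n : ℕ} [NeZero n] (hn : 3 ≤ n) (p : Fin n → ℝ × ℝ)
    (hc : ∀ i j : Fin n, j ≠ i → j ≠ i + 1 → 0 < cross (p (i + 1) - p i) (p j - p i))
    (d : ℝ × ℝ) (hd : d ≠ 0)
    (hedge : ∀ i : Fin n, inner2 d (p (i + 1) - p i) ≠ 0) :
    PolyMonotoneIn d p := by
  obtain ⟨t, ht⟩ := Finite.exists_max fun i => inner2 d (p i)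
  obtain ⟨s, hs⟩ := Finite.exists_min fun i => inner2 d (p i)
  have ht : ∀ y, inner2 d (p y) ≤ inner2 d (p t) := ht
  have hs : ∀ y, inner2 d (p s) ≤ inner2 d (p y) := hs
  have hvt : inner2 d (p (t + 1) - p t) < 0 :=
    lt_of_le_of_ne (by rw [inner2_sub]; linarith [ht (t+1)]) (hedge t)
  have hvt' : 0 < inner2 d (p t - p (t - 1)) := by
    have h := hedge (t - 1)
    rw [sub_add_cancel] at h
    exact lt_of_le_of_ne (by rw [inner2_sub]; linarith [ht (t-1)]) (Ne.symm h)
  have hmax : ∀ q : Fin n, q ≠ t → inner2 d (p q) < inner2 d (p t) :=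
    localmax hn p hc d hd t hvt' hvt
  have hvs : 0 < inner2 d (p (s + 1) - p s) :=
    lt_of_le_of_ne (by rw [inner2_sub]; linarith [hs (s+1)]) (Ne.symm (hedge s))
  have hvs' : inner2 d (p s - p (s - 1)) < 0 := by
    have h := hedge (s - 1)
    rw [sub_add_cancel] at h
    exact lt_of_le_of_ne (by rw [inner2_sub]; linarith [hs (s-1)]) h
  have hst : s ≠ t := by
    intro h
    rw [inner2_sub] at hvs
    have := ht (s + 1)
    rw [← h] at this
    linarith
  refine ⟨s, t, hst, ?_, ?_⟩
  · -- forward arc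
    have main1 : ∀ k : ℕ, k < ((t - s : Fin n) : ℕ) →
        0 < inner2 d (p (s + (k:Fin n) + 1) - p (s + (k:Fin n))) := by
      intro k
      induction k with
      | zero => intro _; simpa using hvs
      | succ k ih =>
        intro hlt
        have hk := ih (by omega)
        by_contra hcon
        push_neg at hcon
        have hlt0 : inner2 d (p (s + ((k+1:ℕ):Fin n) + 1) - p (s + ((k+1:ℕ):Fin n))) < 0 :=
          lt_of_le_of_ne hcon (hedge _)
        have hA : s + ((k+1:ℕ):Fin n) - 1 = s + (k:Fin n) := by push_cast; ring
        have hB : s + ((k+1:ℕ):Fin n) = s + (k:Fin n) + 1 := by push_cast; ring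
        have h1 : 0 < inner2 d (p (s + ((k+1:ℕ):Fin n)) - p (s + ((k+1:ℕ):Fin n) - 1)) := by
          rw [hA, hB]; exact hk
        have hunet : s + ((k+1:ℕ):Fin n) ≠ t := by
          intro h
          have heq : ((k+1:ℕ) : Fin n) = t - s := by rw [← h]; ring
          have hval : (((k+1:ℕ)) : Fin n).val = k+1 :=
            Fin.val_cast_of_lt (lt_trans hlt (t-s).isLt)
          rw [heq] at hval
          omega
        have hlo := localmax hn p hc d hd _ h1 hlt0 t (Ne.symm hunet)
        have hhi := hmax _ hunet
        linarith
    intro k hk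
    have := main1 k hk
    rw [inner2_sub] at this; linarith
  · -- backward arc
    have main2 : ∀ k : ℕ, k < ((s - t : Fin n) : ℕ) →
        inner2 d (p (s - (k:Fin n)) - p (s - (k:Fin n) - 1)) < 0 := by
      intro k
      induction k with
      | zero => intro _; simpa using hvs'
      | succ k ih =>
        intro hlt
        have hk := ih (by omega)
        by_contra hcon
        push_neg at hcon
        have hne : inner2 d (p (s - ((k+1:ℕ):Fin n)) - p (s - ((k+1:ℕ):Fin n) - 1)) ≠ 0 := by
          have h := hedge (s - ((k+1:ℕ):Fin n) - 1)
          rw [sub_add_cancel] at h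
          exact h
        have hpos : 0 < inner2 d (p (s - ((k+1:ℕ):Fin n)) - p (s - ((k+1:ℕ):Fin n) - 1)) :=
          lt_of_le_of_ne hcon (Ne.symm hne)
        have hC : s - ((k+1:ℕ):Fin n) + 1 = s - (k:Fin n) := by push_cast; ring
        have hD2 : s - ((k+1:ℕ):Fin n) = s - (k:Fin n) - 1 := by push_cast; ring
        have h2 : inner2 d (p (s - ((k+1:ℕ):Fin n) + 1) - p (s - ((k+1:ℕ):Fin n))) < 0 := by
          rw [hC, hD2]; exact hk
        have hunet : s - ((k+1:ℕ):Fin n) ≠ t := by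
          intro h
          have heq : ((k+1:ℕ) : Fin n) = s - t := by rw [← h]; ring
          have hval : (((k+1:ℕ)) : Fin n).val = k+1 :=
            Fin.val_cast_of_lt (lt_trans hlt (s-t).isLt)
          rw [heq] at hval
          omega
        have hlo := localmax hn p hc d hd _ hpos h2 t (Ne.symm hunet)
        have hhi := hmax _ hunet
        linarith
    intro k hk
    have := main2 k hk
    rw [inner2_sub] at this; linarith

/-- If `p` is a strictly convex polygon and `d ≠ 0` is not orthogonal to any
edge of `p`, then `p` is `d`-monotone. -/
theorem strictConvex_polygon_monotone_of_no_horizontal_edge {n : ℕ} [NeZero n]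
    (hn : 3 ≤ n) (p : Fin n → ℝ × ℝ) (hp : IsStrictConvexPolygon p)
    (d : ℝ × ℝ) (hd : d ≠ 0)
    (hedge : ∀ i : Fin n, inner2 d (p (i + 1) - p i) ≠ 0) :
    PolyMonotoneIn d p := by
  rcases hp with hp | hp
  · exact ccw_mono hn p hp.2 d hd hedge
  · have hedgeq : ∀ i : Fin n,
        inner2 d ((p ∘ Fin.rev) (i + 1) - (p ∘ Fin.rev) i) ≠ 0 := by
      intro i
      have hj : Fin.rev i = Fin.rev (i + 1) + 1 := by
        rw [fin_rev_eq, fin_rev_eq]; ring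
      show inner2 d (p (Fin.rev (i + 1)) - p (Fin.rev i)) ≠ 0
      rw [hj]
      intro h
      apply hedge (Fin.rev (i + 1))
      rw [inner2_sub] at h ⊢
      linarith
    obtain ⟨s', t', hst', H1, H2⟩ := ccw_mono hn (p ∘ Fin.rev) hp.2 d hd hedgeq
    refine ⟨Fin.rev s', Fin.rev t', fun h => hst' (Fin.rev_injective h), ?_, ?_⟩
    · intro k hk
      have hsub : Fin.rev t' - Fin.rev s' = s' - t' := by
        rw [fin_rev_eq, fin_rev_eq]; ring
      rw [hsub] at hk
      have h := H2 k hk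
      have e1 : Fin.rev s' + (k : Fin n) = Fin.rev (s' - (k : Fin n)) := by
        rw [fin_rev_eq, fin_rev_eq]; ring
      have e2 : Fin.rev s' + (k : Fin n) + 1 = Fin.rev (s' - (k : Fin n) - 1) := by
        rw [fin_rev_eq, fin_rev_eq]; ring
      rw [e2, e1]
      exact h
    · intro k hk
      have hsub : Fin.rev s' - Fin.rev t' = t' - s' := by
        rw [fin_rev_eq, fin_rev_eq]; ring
      rw [hsub] at hk
      have h := H1 k hk
      have e1 : Fin.rev s' - (k : Fin n) = Fin.rev (s' + (k : Fin n)) := by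
        rw [fin_rev_eq, fin_rev_eq]; ring
      have e2 : Fin.rev s' - (k : Fin n) - 1 = Fin.rev (s' + (k : Fin n) + 1) := by
        rw [fin_rev_eq, fin_rev_eq]; ring
      rw [e2, e1]
      exact h
end
end

section
/- Let y_z < y_u < y_v be real numbers and let u₀, u₁, v₀, v₁, z₀, z₁ ∈ ℝ² be points whose second coordinates satisfy (u₀).2 = (u₁).2 = y_u, (v₀).2 = (v₁).2 = y_v, and (z₀).2 = (z₁).2 = y_z. For t ∈ [0,1] set u_t = (1−t)·u₀ + t·u₁, v_t = (1−t)·v₀ + t·v₁, and z_t = (1−t)·z₀ + t·z₁. If cross(v₀ − u₀, z₀ − u₀) > 0 and cross(v₁ − u₁, z₁ − u₁) > 0, then cross(v_t − u_t, z_t − u_t) > 0 for every t ∈ [0,1]. (Equivalently: during a linear morph in which each of the three points stays on its own fixed horizontal line, if the angle of the clockwise rotation around u that brings the segment uv onto the segment uz is smaller than π radians at both endpoints of the morph, then it is smaller than π radians at every time instant.) -/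
noncomputable section

/-- During a linear morph where each of the points `u`, `v`, `z` stays on its
own fixed horizontal line (with `y_z < y_u < y_v`), if the orientation
`cross (v − u) (z − u)` is positive at both ends, it is positive throughout. -/
theorem cross_pos_during_level_morph (y_z y_u y_v : ℝ)
    (hzu : y_z < y_u) (huv : y_u < y_v)
    (u₀ u₁ v₀ v₁ z₀ z₁ : ℝ × ℝ)
    (hu₀ : u₀.2 = y_u) (hu₁ : u₁.2 = y_u)
    (hv₀ : v₀.2 = y_v) (hv₁ : v₁.2 = y_v)
    (hz₀ : z₀.2 = y_z) (hz₁ : z₁.2 = y_z)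
    (h0 : 0 < cross (v₀ - u₀) (z₀ - u₀))
    (h1 : 0 < cross (v₁ - u₁) (z₁ - u₁)) :
    ∀ t ∈ Set.Icc (0 : ℝ) 1,
      0 < cross (((1 - t) • v₀ + t • v₁) - ((1 - t) • u₀ + t • u₁))
            (((1 - t) • z₀ + t • z₁) - ((1 - t) • u₀ + t • u₁)) := by
  intro t ht
  obtain ⟨ht0, ht1⟩ := ht
  have key : cross (((1 - t) • v₀ + t • v₁) - ((1 - t) • u₀ + t • u₁))
      (((1 - t) • z₀ + t • z₁) - ((1 - t) • u₀ + t • u₁))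
      = (1 - t) * cross (v₀ - u₀) (z₀ - u₀) + t * cross (v₁ - u₁) (z₁ - u₁) := by
    simp only [cross, Prod.snd_sub, Prod.fst_sub, Prod.snd_add, Prod.fst_add,
      Prod.smul_snd, Prod.smul_fst, smul_eq_mul]
    rw [hu₀, hu₁, hv₀, hv₁, hz₀, hz₁]
    ring
  rw [key]
  rcases eq_or_lt_of_le ht0 with h | h
  · simp [← h, h0]
  · have := mul_pos h h1
    have := mul_nonneg (sub_nonneg.2 ht1) h0.le
    linarith
end
end
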